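/- Let (Ω, P) be a probability space, σ > 0, h > 0, and let N, M ≥ 1 be integers; set T = N·h and B = M·N. Let x_1, …, x_M be real-valued stochastic processes on Ω indexed by t ∈ [0, T] such that each x_i(kh) is measurable and lies in L⁴(P) for 0 ≤ k ≤ N−1, the random vectors (x_i(0), x_i(h), …, x_i((N−1)h)), i = 1, …, M, are mutually independent, and for each i the moment identities E[x_i(t)²] = σ² t for all t ∈ [0, T] and E[x_i(s)² x_i(t)²] = σ⁴ s (t + 2s) for all 0 ≤ s ≤ t ≤ T hold. Define V̂_M(h) = (1/M) Σ_{i=1}^{M} Σ_{k=0}^{N−1} h · x_i(kh)² and V_T = σ² T² / 2. Then E[(V̂_M(h) − V_T)²] = (σ⁴T²/4)·h² + (σ⁴T⁵/3)·1/(hB) + σ⁴T²(−2T² + 2hT − h²)/(3B). -/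

import Mathlib

open MeasureTheory ProbabilityTheory
open scoped ENNReal

lemma aux_s1 (N : ℕ) : ∑ k ∈ Finset.range N, (k : ℝ) = N * (N - 1) / 2 := by
  induction N with
  | zero => simp
  | succ n ih => rw [Finset.sum_range_succ, ih]; push_cast; ring

lemma aux_s2 (N : ℕ) : ∑ k ∈ Finset.range N, (k : ℝ) ^ 2 = N * (N - 1) * (2 * N - 1) / 6 := by
  induction N with
  | zero => simp
  | succ n ih => rw [Finset.sum_range_succ, ih]; push_cast; ring

noncomputable def qq (k l : ℕ) : ℝ :=
  if k ≤ l then (k : ℝ) * (l + 2 * k) else (l : ℝ) * (k + 2 * l)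

lemma aux_G (N : ℕ) : ∑ k ∈ Finset.range N, ∑ l ∈ Finset.range N, qq k l =
    ((N:ℝ) ^ 4 - 2 * N ^ 3 + 2 * N ^ 2 - N) / 3 + (N:ℝ) ^ 2 * ((N:ℝ) - 1) ^ 2 / 4 := by
  induction N with
  | zero => simp
  | succ n ih =>
    have h1 : ∀ k ∈ Finset.range n, qq k n = (k : ℝ) * (n + 2 * k) := fun k hk =>
      if_pos (le_of_lt (Finset.mem_range.mp hk))
    have h2 : ∀ l ∈ Finset.range n, qq n l = (l : ℝ) * (n + 2 * l) := fun l hl =>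
      if_neg (not_le.mpr (Finset.mem_range.mp hl))
    have hq : qq n n = (n : ℝ) * (n + 2 * n) := if_pos le_rfl
    rw [Finset.sum_range_succ]
    have inner : ∀ k, ∑ l ∈ Finset.range (n+1), qq k l =
        (∑ l ∈ Finset.range n, qq k l) + qq k n := fun k => Finset.sum_range_succ _ _
    simp_rw [inner]
    rw [Finset.sum_add_distrib, ih, Finset.sum_congr rfl h1, Finset.sum_congr rfl h2, hq]
    have e1 := aux_s1 n
    have e2 := aux_s2 n
    simp_rw [mul_add]
    have a1 : ∑ k ∈ Finset.range n, (k:ℝ) * n = (n * ((n:ℝ) - 1) / 2) * n := by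
      rw [← Finset.sum_mul, e1]
    have a2 : ∑ k ∈ Finset.range n, (k:ℝ) * (2 * k) =
        2 * ((n:ℝ) * ((n:ℝ) - 1) * (2 * n - 1) / 6) := by
      rw [← e2, Finset.mul_sum]
      exact Finset.sum_congr rfl (fun k _ => by ring)
    rw [Finset.sum_add_distrib, a1, a2]
    push_cast
    ring

lemma aux_L2mul {Ω : Type*} [MeasurableSpace Ω] {P : Measure Ω} [IsFiniteMeasure P] {f g : Ω → ℝ}
    (hf : MemLp f 2 P) (hg : MemLp g 2 P) : Integrable (fun ω => f ω * g ω) P := by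
  have h : (1 : ℝ≥0∞) / 1 = 1 / 2 + 1 / 2 := by
    rw [ENNReal.div_add_div_same, one_div_one,
      show (1:ℝ≥0∞) + 1 = 2 by norm_num, ENNReal.div_self two_ne_zero ENNReal.ofNat_ne_top]
  haveI : ENNReal.HolderTriple 2 2 1 := ⟨by simpa [one_div] using h.symm⟩
  have := (hf.smul hg : MemLp (g • f) 1 P)
  have h2 : (g • f) = fun ω => f ω * g ω := by ext ω; simp [mul_comm]
  rw [h2] at this
  exact this.integrable le_rfl

lemma aux_L4sq {Ω : Type*} [MeasurableSpace Ω] {P : Measure Ω} {f : Ω → ℝ}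
    (hf : MemLp f 4 P) : MemLp (fun ω => f ω ^ 2) 2 P := by
  have h : (1 : ℝ≥0∞) / 2 = 1 / 4 + 1 / 4 := by
    rw [ENNReal.div_add_div_same, show (4 : ℝ≥0∞) = 2 * 2 by norm_num,
      show (1:ℝ≥0∞) + 1 = 2 * 1 by norm_num,
      ENNReal.mul_div_mul_left 1 2 two_ne_zero ENNReal.ofNat_ne_top]
  haveI : ENNReal.HolderTriple 4 4 2 := ⟨by simpa [one_div] using h.symm⟩
  have := (hf.smul hf : MemLp (f • f) 2 P)
  have h2 : (f • f) = fun ω => f ω ^ 2 := by ext ω; simp [sq]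
  rwa [h2] at this

theorem stmt_1
    {Ω : Type*} [MeasurableSpace Ω] (P : Measure Ω) [IsProbabilityMeasure P]
    (σ h : ℝ) (hσ : 0 < σ) (hh : 0 < h)
    (N M : ℕ) (hN : 1 ≤ N) (hM : 1 ≤ M)
    (x : Fin M → ℝ → Ω → ℝ)
    (hmeas : ∀ (i : Fin M) (k : ℕ), k < N → Measurable (x i (k * h)))
    (hL4 : ∀ (i : Fin M) (k : ℕ), k < N → MemLp (x i (k * h)) 4 P)
    (hindep : iIndepFun
      (fun (i : Fin M) (ω : Ω) => fun k : Fin N => x i (k * h) ω) P)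
    (hm2 : ∀ (i : Fin M) (t : ℝ), 0 ≤ t → t ≤ N * h →
      ∫ ω, (x i t ω) ^ 2 ∂P = σ ^ 2 * t)
    (hm4 : ∀ (i : Fin M) (s t : ℝ), 0 ≤ s → s ≤ t → t ≤ N * h →
      ∫ ω, (x i s ω) ^ 2 * (x i t ω) ^ 2 ∂P = σ ^ 4 * s * (t + 2 * s)) :
    ∫ ω, ((1 / (M : ℝ)) * ∑ i : Fin M, ∑ k ∈ Finset.range N, h * (x i (k * h) ω) ^ 2 -
        σ ^ 2 * (N * h) ^ 2 / 2) ^ 2 ∂P =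
      σ ^ 4 * (N * h) ^ 2 / 4 * h ^ 2 +
        σ ^ 4 * (N * h) ^ 5 / 3 * (1 / (h * ((M : ℝ) * N))) +
        σ ^ 4 * (N * h) ^ 2 * (-2 * (N * h) ^ 2 + 2 * h * (N * h) - h ^ 2) /
          (3 * ((M : ℝ) * N)) := by
  classical
  have hMne : (M : ℝ) ≠ 0 := Nat.cast_ne_zero.mpr (by omega)
  have hNne : (N : ℝ) ≠ 0 := Nat.cast_ne_zero.mpr (by omega)
  have hhne : h ≠ 0 := ne_of_gt hh
  set Y : Fin M → Ω → ℝ := fun i ω => ∑ k ∈ Finset.range N, h * (x i (k * h) ω) ^ 2 with hYdef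
  set V : ℝ := σ ^ 2 * (N * h) ^ 2 / 2 with hVdef
  set μ : ℝ := σ ^ 2 * h ^ 2 * ((N:ℝ) * ((N:ℝ) - 1) / 2) with hμdef
  set S : ℝ := σ ^ 4 * h ^ 4 *
    (((N:ℝ) ^ 4 - 2 * N ^ 3 + 2 * N ^ 2 - N) / 3 + (N:ℝ) ^ 2 * ((N:ℝ) - 1) ^ 2 / 4) with hSdef
  -- bounds for grid points
  have hb : ∀ k : ℕ, k < N → (0:ℝ) ≤ k * h ∧ (k:ℝ) * h ≤ N * h := by
    intro k hk
    constructor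
    · positivity
    · have : (k:ℝ) ≤ N := by exact_mod_cast hk.le
      nlinarith
  -- L² membership of squares
  have memf : ∀ (i : Fin M) (k : ℕ), k < N →
      MemLp (fun ω => (x i (k * h) ω) ^ 2) 2 P := fun i k hk => aux_L4sq (hL4 i k hk)
  have intf : ∀ (i : Fin M) (k : ℕ), k < N →
      Integrable (fun ω => (x i (k * h) ω) ^ 2) P :=
    fun i k hk => (memf i k hk).integrable one_le_two
  have intff : ∀ (i : Fin M) (k l : ℕ), k < N → l < N →
      Integrable (fun ω => (x i (k * h) ω) ^ 2 * (x i (l * h) ω) ^ 2) P :=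
    fun i k l hk hl => aux_L2mul (memf i k hk) (memf i l hl)
  -- second moments
  have Ef : ∀ (i : Fin M) (k : ℕ), k < N →
      ∫ ω, (x i (k * h) ω) ^ 2 ∂P = σ ^ 2 * (k * h) :=
    fun i k hk => hm2 i (k * h) (hb k hk).1 (hb k hk).2
  -- fourth moments
  have Eff : ∀ (i : Fin M) (k l : ℕ), k < N → l < N →
      ∫ ω, (x i (k * h) ω) ^ 2 * (x i (l * h) ω) ^ 2 ∂P = σ ^ 4 * h ^ 2 * qq k l := by
    intro i k l hk hl
    rcases le_or_gt k l with hkl | hkl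
    · have hkl' : (k:ℝ) * h ≤ l * h := by
        have : (k:ℝ) ≤ l := by exact_mod_cast hkl
        nlinarith
      rw [hm4 i (k*h) (l*h) (hb k hk).1 hkl' (hb l hl).2, qq, if_pos hkl]
      ring
    · have hkl' : (l:ℝ) * h ≤ k * h := by
        have : (l:ℝ) ≤ k := by exact_mod_cast hkl.le
        nlinarith
      have comm : ∀ ω, (x i (k * h) ω) ^ 2 * (x i (l * h) ω) ^ 2 =
          (x i (l * h) ω) ^ 2 * (x i (k * h) ω) ^ 2 := fun ω => mul_comm _ _
      simp_rw [comm]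
      rw [hm4 i (l*h) (k*h) (hb l hl).1 hkl' (hb k hk).2, qq, if_neg (not_le.mpr hkl)]
      ring
  -- mean of Y
  have EY : ∀ i : Fin M, ∫ ω, Y i ω ∂P = μ := by
    intro i
    simp only [hYdef]
    rw [integral_finset_sum _ (fun k hk => (intf i k (Finset.mem_range.mp hk)).const_mul h)]
    have : ∀ k ∈ Finset.range N, ∫ ω, h * (x i (k * h) ω) ^ 2 ∂P = σ^2 * h^2 * k := by
      intro k hk
      rw [integral_const_mul, Ef i k (Finset.mem_range.mp hk)]
      ring
    rw [Finset.sum_congr rfl this, ← Finset.mul_sum, aux_s1, hμdef]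
  -- Y in L²
  have memY : ∀ i : Fin M, MemLp (Y i) 2 P := by
    intro i
    simp only [hYdef]
    exact memLp_finset_sum _ (fun k hk => (memf i k (Finset.mem_range.mp hk)).const_mul h)
  have intY : ∀ i : Fin M, Integrable (Y i) P := fun i => (memY i).integrable one_le_two
  have intYY : ∀ i j : Fin M, Integrable (fun ω => Y i ω * Y j ω) P :=
    fun i j => aux_L2mul (memY i) (memY j)
  -- second moment of Y
  have EYsq : ∀ i : Fin M, ∫ ω, Y i ω * Y i ω ∂P = S := by
    intro i
    have expand : ∀ ω, Y i ω * Y i ω = ∑ k ∈ Finset.range N, ∑ l ∈ Finset.range N,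
        (h * (x i (k * h) ω) ^ 2) * (h * (x i (l * h) ω) ^ 2) := by
      intro ω
      simp only [hYdef]
      exact Finset.sum_mul_sum _ _ _ _
    simp_rw [expand]
    rw [integral_finset_sum]
    swap
    · intro k hk
      apply integrable_finset_sum
      intro l hl
      have : (fun ω => (h * (x i (k * h) ω) ^ 2) * (h * (x i (l * h) ω) ^ 2)) =
          (fun ω => (h * h) * ((x i (k * h) ω) ^ 2 * (x i (l * h) ω) ^ 2)) := by
        ext ω; ring
      rw [this]
      exact (intff i k l (Finset.mem_range.mp hk) (Finset.mem_range.mp hl)).const_mul _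
    have inner : ∀ k ∈ Finset.range N,
        ∫ ω, ∑ l ∈ Finset.range N, (h * (x i (k * h) ω) ^ 2) * (h * (x i (l * h) ω) ^ 2) ∂P =
        ∑ l ∈ Finset.range N, σ ^ 4 * h ^ 4 * qq k l := by
      intro k hk
      rw [integral_finset_sum]
      swap
      · intro l hl
        have : (fun ω => (h * (x i (k * h) ω) ^ 2) * (h * (x i (l * h) ω) ^ 2)) =
            (fun ω => (h * h) * ((x i (k * h) ω) ^ 2 * (x i (l * h) ω) ^ 2)) := by
          ext ω; ring
        rw [this]
        exact (intff i k l (Finset.mem_range.mp hk) (Finset.mem_range.mp hl)).const_mul _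
      refine Finset.sum_congr rfl (fun l hl => ?_)
      have : (fun ω => (h * (x i (k * h) ω) ^ 2) * (h * (x i (l * h) ω) ^ 2)) =
          (fun ω => (h * h) * ((x i (k * h) ω) ^ 2 * (x i (l * h) ω) ^ 2)) := by
        ext ω; ring
      rw [this, integral_const_mul, Eff i k l (Finset.mem_range.mp hk) (Finset.mem_range.mp hl)]
      ring
    rw [Finset.sum_congr rfl inner]
    simp_rw [← Finset.mul_sum]
    rw [aux_G, hSdef]
  -- independence of distinct Y's
  have indepY : ∀ i j : Fin M, i ≠ j → IndepFun (Y i) (Y j) P := by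
    intro i j hij
    let φ : (Fin N → ℝ) → ℝ := fun v => ∑ k : Fin N, h * (v k) ^ 2
    have mφ : Measurable φ := by
      apply Finset.measurable_sum
      intro k _
      exact (measurable_const.mul ((measurable_pi_apply k).pow_const 2))
    have hcomp : ∀ i : Fin M, Y i = φ ∘ (fun ω => fun k : Fin N => x i (k * h) ω) := by
      intro i
      ext ω
      simp only [hYdef]
      simp only [Function.comp_apply, φ]
      rw [Fin.sum_univ_eq_sum_range (fun k => h * (x i (k * h) ω) ^ 2)]
    rw [hcomp i, hcomp j]
    exact (hindep.indepFun hij).comp mφ mφ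
  have EYY : ∀ i j : Fin M, i ≠ j → ∫ ω, Y i ω * Y j ω ∂P = μ * μ := by
    intro i j hij
    have := (indepY i j hij).integral_mul_eq_mul_integral (intY i).1 (intY j).1
    have heq : (fun ω => Y i ω * Y j ω) = Y i * Y j := rfl
    rw [heq, this, EY i, EY j]
  -- the sum process W
  set W : Ω → ℝ := fun ω => ∑ i : Fin M, Y i ω with hWdef
  have memW : MemLp W 2 P := memLp_finset_sum _ (fun i _ => memY i)
  have intW : Integrable W P := memW.integrable one_le_two
  have intW2 : Integrable (fun ω => W ω * W ω) P := aux_L2mul memW memW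
  have EW : ∫ ω, W ω ∂P = M * μ := by
    rw [hWdef, integral_finset_sum _ (fun i _ => intY i)]
    simp [EY, Finset.sum_const, Finset.card_univ]
  have EW2 : ∫ ω, W ω * W ω ∂P = M * S + ((M:ℝ)^2 - M) * μ^2 := by
    have expand : ∀ ω, W ω * W ω = ∑ i : Fin M, ∑ j : Fin M, Y i ω * Y j ω := by
      intro ω; simp only [hWdef]; exact Finset.sum_mul_sum _ _ _ _
    simp_rw [expand]
    rw [integral_finset_sum _ (fun i _ => integrable_finset_sum _ (fun j _ => intYY i j))]
    have inner : ∀ i : Fin M, (∫ ω, ∑ j : Fin M, Y i ω * Y j ω ∂P) =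
        (M:ℝ) * μ^2 + (S - μ^2) := by
      intro i
      rw [integral_finset_sum _ (fun j _ => intYY i j)]
      have term : ∀ j : Fin M, ∫ ω, Y i ω * Y j ω ∂P =
          μ^2 + (if i = j then S - μ^2 else 0) := by
        intro j
        by_cases hij : i = j
        · subst hij; rw [if_pos rfl, EYsq i]; ring
        · rw [if_neg hij, EYY i j hij]; ring
      rw [Finset.sum_congr rfl (fun j _ => term j), Finset.sum_add_distrib,
        Finset.sum_const, Finset.sum_ite_eq, if_pos (Finset.mem_univ i), Finset.card_univ]
      simp [mul_comm]
    rw [Finset.sum_congr rfl (fun i _ => inner i), Finset.sum_const, Finset.card_univ]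
    simp only [Fintype.card_fin, nsmul_eq_mul]
    ring
  -- rewrite goal in terms of W
  have goal_eq : (∫ ω, ((1 / (M : ℝ)) *
        ∑ i : Fin M, ∑ k ∈ Finset.range N, h * (x i (k * h) ω) ^ 2 -
        σ ^ 2 * (N * h) ^ 2 / 2) ^ 2 ∂P) =
      ∫ ω, ((1 / (M:ℝ)) * W ω - V) ^ 2 ∂P := rfl
  rw [goal_eq]
  have expand2 : ∀ ω, ((1 / (M:ℝ)) * W ω - V) ^ 2 =
      (1 / (M:ℝ))^2 * (W ω * W ω) - (2 * V / M) * W ω + V^2 := by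
    intro ω; field_simp; ring
  simp_rw [expand2]
  have int1 : Integrable (fun ω => (1 / (M:ℝ))^2 * (W ω * W ω)) P := intW2.const_mul _
  have int2 : Integrable (fun ω => (2 * V / M) * W ω) P := intW.const_mul _
  have int12 : Integrable (fun ω => (1 / (M:ℝ))^2 * (W ω * W ω) - (2 * V / M) * W ω) P :=
    int1.sub int2
  rw [integral_add int12 (integrable_const _), integral_sub int1 int2,
    integral_const_mul, integral_const_mul, integral_const, EW, EW2]
  simp only [measure_univ, probReal_univ, ENNReal.toReal_one, smul_eq_mul, one_mul]
  rw [hμdef, hSdef, hVdef]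
  field_simp
  ring
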